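/- Let f be a relation on (X,d) and define the Conley chain relation 𝒞_d f = {(x,y) : m_d^f(x,y) = 0}. Then m_d^{𝒞_d f} = m_d^f; in particular 𝒞_d(𝒞_d f) = 𝒞_d f (the Conley operator is idempotent). -/

import Mathlib

namespace ChainRec

variable {X : Type*}

/-- chain-length of a chain, with `x` the start point and `y` the end point.
For `c = [(a₁,b₁),…,(aₙ,bₙ)]` this is `d x a₁ + Σ d bᵢ a_{i+1} + d bₙ y`. -/
noncomputable def chainLen (d : X → X → ℝ) : X → X → List (X × X) → ℝ
  | x, y, [] => d x y
  | x, y, p :: t => d x p.1 + chainLen d p.2 y t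

/-- chain-bound of a chain: the max of all the gap distances. -/
noncomputable def chainBound (d : X → X → ℝ) : X → X → List (X × X) → ℝ
  | x, y, [] => d x y
  | x, y, p :: t => max (d x p.1) (chainBound d p.2 y t)

/-- The Aubry–Mather barrier function `ℓ_d^f`. -/
noncomputable def ell (d : X → X → ℝ) (f : Set (X × X)) (x y : X) : ℝ :=
  sInf { r | ∃ c : List (X × X), c ≠ [] ∧ (∀ p ∈ c, p ∈ f) ∧ r = chainLen d x y c }

/-- The Conley barrier function `m_d^f`. -/
noncomputable def mbar (d : X → X → ℝ) (f : Set (X × X)) (x y : X) : ℝ :=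
  sInf { r | ∃ c : List (X × X), c ≠ [] ∧ (∀ p ∈ c, p ∈ f) ∧ r = chainBound d x y c }

/-- The Conley chain relation `𝒞_d f`. -/
def conleyRel (d : X → X → ℝ) (f : Set (X × X)) : Set (X × X) :=
  { p | mbar d f p.1 p.2 = 0 }

lemma d_nonneg (d : X → X → ℝ) (hrefl : ∀ x, d x x = 0) (hsymm : ∀ x y, d x y = d y x)
    (htri : ∀ x y z, d x z ≤ d x y + d y z) (x y : X) : 0 ≤ d x y := by
  have h := htri x y x
  rw [hrefl, hsymm y x] at h
  linarith

lemma chainBound_nonneg (d : X → X → ℝ) (hd : ∀ x y, 0 ≤ d x y) :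
    ∀ (c : List (X × X)) (x y : X), 0 ≤ chainBound d x y c
  | [], x, y => hd x y
  | p :: t, x, y => le_max_of_le_right (chainBound_nonneg d hd t p.2 y)

lemma chainBound_shift_right (d : X → X → ℝ) (hd : ∀ x y, 0 ≤ d x y)
    (htri : ∀ x y z, d x z ≤ d x y + d y z) :
    ∀ (t : List (X × X)) (z y b : X), chainBound d z y t ≤ chainBound d z b t + d b y
  | [], z, y, b => htri z b y
  | q :: s, z, y, b => by
    simp only [chainBound]
    apply max_le
    · exact le_add_of_le_of_nonneg (le_max_left _ _) (hd b y)
    · exact le_trans (chainBound_shift_right d hd htri s q.2 y b)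
        (add_le_add_left (le_max_right _ _) _)

lemma chainBound_shift (d : X → X → ℝ) (hd : ∀ x y, 0 ≤ d x y)
    (htri : ∀ x y z, d x z ≤ d x y + d y z)
    (p : X × X) (t : List (X × X)) (x y a b : X) :
    chainBound d x y (p :: t) ≤ chainBound d a b (p :: t) + max (d x a) (d b y) := by
  simp only [chainBound]
  apply max_le
  · calc d x p.1 ≤ d x a + d a p.1 := htri x a p.1
      _ ≤ max (d x a) (d b y) + max (d a p.1) (chainBound d p.2 b t) := by
          apply add_le_add (le_max_left _ _) (le_max_left _ _)
      _ = _ := by ring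
  · calc chainBound d p.2 y t ≤ chainBound d p.2 b t + d b y :=
        chainBound_shift_right d hd htri t p.2 y b
      _ ≤ max (d a p.1) (chainBound d p.2 b t) + max (d x a) (d b y) :=
        add_le_add (le_max_right _ _) (le_max_right _ _)

lemma chainBound_append (d : X → X → ℝ) :
    ∀ (e : List (X × X)) (q : X × X) (t : List (X × X)) (x y : X),
      chainBound d x y (e ++ q :: t) = max (chainBound d x q.1 e) (chainBound d q.2 y t)
  | [], q, t, x, y => rfl
  | p :: s, q, t, x, y => by
    simp only [List.cons_append, chainBound, List.append_eq, chainBound_append d s q t p.2 y]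
    rw [max_assoc]

lemma mbar_bddBelow (d : X → X → ℝ) (hd : ∀ x y, 0 ≤ d x y) (f : Set (X × X)) (x y : X) :
    BddBelow { r | ∃ c : List (X × X), c ≠ [] ∧ (∀ p ∈ c, p ∈ f) ∧ r = chainBound d x y c } := by
  refine ⟨0, ?_⟩
  rintro r ⟨c, -, -, rfl⟩
  exact chainBound_nonneg d hd c x y

lemma mbar_le (d : X → X → ℝ) (hd : ∀ x y, 0 ≤ d x y) (f : Set (X × X)) (x y : X)
    {c : List (X × X)} (hc : c ≠ []) (hcf : ∀ p ∈ c, p ∈ f) :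
    mbar d f x y ≤ chainBound d x y c :=
  csInf_le (mbar_bddBelow d hd f x y) ⟨c, hc, hcf, rfl⟩

lemma mbar_nonneg (d : X → X → ℝ) (hd : ∀ x y, 0 ≤ d x y) (f : Set (X × X)) (x y : X) :
    0 ≤ mbar d f x y := by
  apply Real.sInf_nonneg
  rintro r ⟨c, -, -, rfl⟩
  exact chainBound_nonneg d hd c x y

lemma exists_small (d : X → X → ℝ) (f : Set (X × X)) (hf : f.Nonempty) {a b : X}
    (h : mbar d f a b = 0) {ε : ℝ} (hε : 0 < ε) :
    ∃ e : List (X × X), e ≠ [] ∧ (∀ p ∈ e, p ∈ f) ∧ chainBound d a b e < ε := by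
  obtain ⟨p₀, hp₀⟩ := hf
  have hne : { r | ∃ c : List (X × X), c ≠ [] ∧ (∀ p ∈ c, p ∈ f) ∧
      r = chainBound d a b c }.Nonempty :=
    ⟨_, [p₀], by simp, by simpa using hp₀, rfl⟩
  have hlt : sInf { r | ∃ c : List (X × X), c ≠ [] ∧ (∀ p ∈ c, p ∈ f) ∧
      r = chainBound d a b c } < ε := by
    rw [show sInf _ = mbar d f a b from rfl, h]; exact hε
  obtain ⟨r, ⟨c, hc, hcf, rfl⟩, hr⟩ := exists_lt_of_csInf_lt hne hlt
  exact ⟨c, hc, hcf, hr⟩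



lemma refine_chain (d : X → X → ℝ) (hd : ∀ x y, 0 ≤ d x y)
    (htri : ∀ x y z, d x z ≤ d x y + d y z)
    (f : Set (X × X)) (hf : f.Nonempty) :
    ∀ (c : List (X × X)), c ≠ [] → (∀ p ∈ c, p ∈ conleyRel d f) →
    ∀ (x y : X) (ε : ℝ), 0 < ε → ∃ e : List (X × X), e ≠ [] ∧ (∀ p ∈ e, p ∈ f) ∧
      chainBound d x y e ≤ chainBound d x y c + ε := by
  intro c
  induction c with
  | nil => simp
  | cons p t ih =>
    intro _ hc x y ε hε
    have hp : mbar d f p.1 p.2 = 0 := hc p List.mem_cons_self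
    cases t with
    | nil =>
      obtain ⟨e, he, hef, hb⟩ := exists_small d f hf hp hε
      refine ⟨e, he, hef, ?_⟩
      obtain ⟨p', s, rfl⟩ := List.exists_cons_of_ne_nil he
      calc chainBound d x y (p' :: s)
          ≤ chainBound d p.1 p.2 (p' :: s) + max (d x p.1) (d p.2 y) :=
            chainBound_shift d hd htri p' s x y p.1 p.2
        _ ≤ chainBound d x y [p] + ε := by
            have : chainBound d x y [p] = max (d x p.1) (d p.2 y) := rfl
            rw [this]; linarith
    | cons q s =>
      have hε2 : (0:ℝ) < ε / 2 := by linarith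
      obtain ⟨e₁, he₁, hef₁, hb₁⟩ := exists_small d f hf hp hε2
      obtain ⟨e₂, he₂, hef₂, hb₂⟩ := ih (by simp)
        (fun r hr => hc r (List.mem_cons_of_mem p hr)) p.2 y (ε / 2) hε2
      obtain ⟨q', t', rfl⟩ := List.exists_cons_of_ne_nil he₂
      refine ⟨e₁ ++ q' :: t', by simp, ?_, ?_⟩
      · intro r hr
        rcases List.mem_append.mp hr with h | h
        · exact hef₁ r h
        · exact hef₂ r h
      · rw [chainBound_append]
        set C := chainBound d p.2 y (q :: s) with hC
        have hgoal_eq : chainBound d x y (p :: q :: s) = max (d x p.1) C := rfl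
        rw [hgoal_eq]
        have hb₂' : max (d p.2 q'.1) (chainBound d q'.2 y t') ≤ C + ε / 2 := hb₂
        apply max_le
        · obtain ⟨p'', s'', rfl⟩ := List.exists_cons_of_ne_nil he₁
          calc chainBound d x q'.1 (p'' :: s'')
              ≤ chainBound d p.1 p.2 (p'' :: s'') + max (d x p.1) (d p.2 q'.1) :=
                chainBound_shift d hd htri p'' s'' x q'.1 p.1 p.2
            _ ≤ ε / 2 + max (d x p.1) (C + ε / 2) := by
                apply add_le_add (le_of_lt hb₁)
                exact max_le_max le_rfl (le_trans (le_max_left _ _) hb₂')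
            _ ≤ ε / 2 + (max (d x p.1) C + ε / 2) := by
                apply add_le_add_right
                apply max_le
                · exact le_add_of_le_of_nonneg (le_max_left _ _) (by linarith)
                · exact add_le_add_left (le_max_right _ _) _
            _ = max (d x p.1) C + ε := by ring
        · calc chainBound d q'.2 y t' ≤ C + ε / 2 :=
              le_trans (le_max_right _ _) hb₂'
            _ ≤ max (d x p.1) C + ε := by
              have := le_max_right (d x p.1) C; linarith

theorem conley_idempotent [Nonempty X] (d : X → X → ℝ) (f : Set (X × X))
    (hrefl : ∀ x, d x x = 0) (hsymm : ∀ x y, d x y = d y x)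
    (htri : ∀ x y z, d x z ≤ d x y + d y z)
    (hbdd : ∃ C, ∀ x y, d x y ≤ C)
    :
    (∀ x y, mbar d (conleyRel d f) x y = mbar d f x y) ∧
    conleyRel d (conleyRel d f) = conleyRel d f := by
  have hd : ∀ x y, 0 ≤ d x y := d_nonneg d hrefl hsymm htri
  -- the diagonal-style fact: a single pair in g gives mbar = 0 on it
  have hdiag : ∀ (g : Set (X × X)) (p : X × X), p ∈ g → mbar d g p.1 p.2 = 0 := by
    intro g p hp
    apply le_antisymm _ (mbar_nonneg d hd g p.1 p.2)
    have h1 : chainBound d p.1 p.2 [p] = 0 := by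
      show max (d p.1 p.1) (d p.2 p.2) = 0
      rw [hrefl, hrefl, max_self]
    have := mbar_le d hd g p.1 p.2 (c := [p]) (by simp) (by simpa using hp)
    rwa [h1] at this
  have hsub : f ⊆ conleyRel d f := fun p hp => hdiag f p hp
  have key : ∀ x y, mbar d (conleyRel d f) x y = mbar d f x y := by
    intro x y
    rcases Set.eq_empty_or_nonempty f with rfl | hf
    · -- empty case: both sides are 0
      have h0 : ∀ a b : X, mbar d (∅ : Set (X × X)) a b = 0 := by
        intro a b
        have hempty : { r | ∃ c : List (X × X), c ≠ [] ∧ (∀ p ∈ c, p ∈ (∅ : Set (X × X))) ∧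
            r = chainBound d a b c } = ∅ := by
          ext r
          simp only [Set.mem_setOf_eq, Set.mem_empty_iff_false, iff_false]
          rintro ⟨c, hc, hcf, -⟩
          obtain ⟨p', s, rfl⟩ := List.exists_cons_of_ne_nil hc
          exact hcf p' List.mem_cons_self
        show sInf _ = 0
        rw [hempty, Real.sInf_empty]
      rw [h0 x y]
      have hxy : ((x, y) : X × X) ∈ conleyRel d (∅ : Set (X × X)) := h0 x y
      exact hdiag _ (x, y) hxy
    · obtain ⟨p₀, hp₀⟩ := hf
      apply le_antisymm
      · -- monotonicity direction
        have hne1 : { r | ∃ c : List (X × X), c ≠ [] ∧ (∀ p ∈ c, p ∈ f) ∧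
            r = chainBound d x y c }.Nonempty :=
          ⟨chainBound d x y [p₀], [p₀], by simp, by simpa using hp₀, rfl⟩
        apply csInf_le_csInf (mbar_bddBelow d hd (conleyRel d f) x y) hne1
        rintro r ⟨c, hc, hcf, rfl⟩
        exact ⟨c, hc, fun p hp => hsub (hcf p hp), rfl⟩
      · -- refinement direction
        have hne2 : { r | ∃ c : List (X × X), c ≠ [] ∧ (∀ p ∈ c, p ∈ conleyRel d f) ∧
            r = chainBound d x y c }.Nonempty :=
          ⟨chainBound d x y [p₀], [p₀], by simp, by simpa using hsub hp₀, rfl⟩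
        apply le_csInf hne2
        rintro r ⟨c, hc, hcf, rfl⟩
        refine le_of_forall_pos_le_add ?_
        intro ε hε
        obtain ⟨e, he, hef, hb⟩ := refine_chain d hd htri f ⟨p₀, hp₀⟩ c hc hcf x y ε hε
        exact le_trans (mbar_le d hd f x y he hef) hb
  refine ⟨key, ?_⟩
  ext p
  show mbar d (conleyRel d f) p.1 p.2 = 0 ↔ mbar d f p.1 p.2 = 0
  rw [key]

end ChainRec
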